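/- Let n ≥ 4 with n ≠ 5. If G is an n-vertex 3-chromatic 2-connected simple graph, then i(G) ≤ 2^(n−2) + 2 = i(K_2 ∨ E_{n−2}); that is, K_2 ∨ E_{n−2} maximizes the number of independent sets among n-vertex 3-chromatic 2-connected graphs. -/

import Mathlib

open SimpleGraph

/-- The number of independent sets in `G` (including the empty set). -/
noncomputable def numIndep {V : Type*} [Fintype V] (G : SimpleGraph V) : ℕ :=
  Nat.card {s : Finset V // ∀ a ∈ s, ∀ b ∈ s, ¬ G.Adj a b}

/-- `G` is `ℓ`-connected: it has more than `ℓ` vertices and deleting any set of fewer than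
`ℓ` vertices leaves a connected graph. -/
def LConnected {V : Type*} [Fintype V] (G : SimpleGraph V) (ℓ : ℕ) : Prop :=
  ℓ < Fintype.card V ∧
    ∀ s : Finset V, s.card < ℓ → (G.induce ((↑s : Set V)ᶜ)).Connected

/-- The graph `K_2 ∨ E_{n-2}` on `Fin n`: the first two vertices are adjacent to each other and
to all other vertices; the remaining `n-2` vertices form an independent set. -/
def K2JoinE (n : ℕ) : SimpleGraph (Fin n) where
  Adj i j := i ≠ j ∧ ((i : ℕ) < 2 ∨ (j : ℕ) < 2)
  symm := ⟨by rintro i j ⟨h1, h2⟩; exact ⟨h1.symm, by tauto⟩⟩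
  loopless := ⟨by rintro i ⟨h, -⟩; exact h rfl⟩

open Finset

section ArithAux


lemma add_le_mul_add_one {a b : ℕ} (ha : 1 ≤ a) (hb : 1 ≤ b) : a + b ≤ a * b + 1 := by
  obtain ⟨a, rfl⟩ := Nat.exists_eq_add_of_le ha
  obtain ⟨b, rfl⟩ := Nat.exists_eq_add_of_le hb
  nlinarith

lemma two_pow_add_two_pow_le {x y s : ℕ} (h : x + y ≤ s) : 2 ^ x + 2 ^ y ≤ 2 ^ s + 1 := by
  calc 2 ^ x + 2 ^ y ≤ 2 ^ x * 2 ^ y + 1 :=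
        add_le_mul_add_one Nat.one_le_two_pow Nat.one_le_two_pow
    _ = 2 ^ (x + y) + 1 := by rw [pow_add]
    _ ≤ 2 ^ s + 1 := by
        have := Nat.pow_le_pow_right (show 1 ≤ 2 by norm_num) h
        omega

lemma conv2 {x y m : ℕ} (hx : x ≤ m) (hy : y ≤ m) (hxy : x + y ≤ m + 1) :
    2 ^ x + 2 ^ y ≤ 2 ^ m + 2 := by
  rcases Nat.eq_zero_or_pos x with rfl | hx1
  · have : 2 ^ y ≤ 2 ^ m := Nat.pow_le_pow_right (by norm_num) hy
    simpa using by omega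
  rcases Nat.eq_zero_or_pos y with rfl | hy1
  · have : 2 ^ x ≤ 2 ^ m := Nat.pow_le_pow_right (by norm_num) hx
    simpa using by omega
  obtain ⟨x, rfl⟩ := Nat.exists_eq_add_of_le hx1
  obtain ⟨y, rfl⟩ := Nat.exists_eq_add_of_le hy1
  have h1 : 2 ^ x + 2 ^ y ≤ 2 ^ (x + y) + 1 := two_pow_add_two_pow_le le_rfl
  have h2 : 2 ^ (x + y + 1) ≤ 2 ^ m := Nat.pow_le_pow_right (by norm_num) (by omega)
  have h2' : 2 * 2 ^ (x + y) ≤ 2 ^ m := by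
    have : 2 ^ (x + y + 1) = 2 ^ (x + y) * 2 := pow_succ 2 (x + y)
    omega
  calc 2 ^ (1 + x) + 2 ^ (1 + y) = 2 * 2 ^ x + 2 * 2 ^ y := by
        rw [pow_add, pow_add]; ring
    _ ≤ 2 ^ m + 2 := by omega

lemma three_pow_le {b : ℕ} (hb : 5 ≤ b) : 3 ^ b * 4 ≤ 4 ^ b := by
  induction b, hb using Nat.le_induction with
  | base => norm_num
  | succ k hk ih =>
      have e : (3:ℕ) ^ (k+1) * 4 = 3 * (3 ^ k * 4) := by ring
      rw [e, pow_succ]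
      calc 3 * (3 ^ k * 4) ≤ 3 * 4 ^ k := by omega
        _ ≤ 4 ^ k * 4 := by omega

lemma single3_aux {t1 t2 t3 m : ℕ} (h1 : 1 ≤ t1) (h1' : t1 ≤ m + 2)
    (hs : t1 + t2 + t3 ≤ m + 3) : 2 ^ t1 + 2 ^ t2 + 2 ^ t3 ≤ 2 ^ (m + 3) := by
  obtain ⟨k, hk⟩ := Nat.exists_eq_add_of_le (show t1 ≤ m + 3 by omega)
  have h23 : 2 ^ t2 + 2 ^ t3 ≤ 2 ^ k + 1 := two_pow_add_two_pow_le (by omega)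
  have hcv : 2 ^ t1 + 2 ^ k ≤ 2 ^ (m + 2) + 2 := conv2 h1' (by omega) (by omega)
  have hbig : (4:ℕ) ≤ 2 ^ (m + 2) := by
    calc (4:ℕ) = 2 ^ 2 := by norm_num
      _ ≤ 2 ^ (m + 2) := Nat.pow_le_pow_right (by norm_num) (by omega)
  have : (2:ℕ) ^ (m + 3) = 2 * 2 ^ (m + 2) := by rw [pow_succ]; ring
  omega

lemma single3 {t1 t2 t3 m : ℕ} (h1 : t1 ≤ m + 2) (h2 : t2 ≤ m + 2) (h3 : t3 ≤ m + 2)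
    (hs : t1 + t2 + t3 ≤ m + 3) : 2 ^ t1 + 2 ^ t2 + 2 ^ t3 ≤ 2 ^ (m + 3) := by
  rcases Nat.eq_zero_or_pos t1 with rfl | ht1
  · rcases Nat.eq_zero_or_pos t2 with rfl | ht2
    · rcases Nat.eq_zero_or_pos t3 with rfl | ht3
      · have : (8:ℕ) ≤ 2 ^ (m + 3) := by
          calc (8:ℕ) = 2 ^ 3 := by norm_num
            _ ≤ 2 ^ (m + 3) := Nat.pow_le_pow_right (by norm_num) (by omega)
        simpa using by omega
      · have := single3_aux ht3 h3 (show t3 + 0 + 0 ≤ m + 3 by omega)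
        simp only [pow_zero] at this ⊢
        omega
    · have := single3_aux ht2 h2 (show t2 + 0 + t3 ≤ m + 3 by omega)
      simp only [pow_zero] at this ⊢
      omega
  · have := single3_aux ht1 h1' (show t1 + t2 + t3 ≤ m + 3 from hs)
    omega
  where h1' := h1

lemma four_singles {t1 t2 t3 t4 m : ℕ} (h1 : t1 ≤ m + 2) (h2 : t2 ≤ m + 2)
    (h3 : t3 ≤ m + 2) (h4 : t4 ≤ m + 2) (hs : t1 + t2 + t3 + t4 ≤ 2 * (m + 3)) :
    2 ^ t1 + 2 ^ t2 + 2 ^ t3 + 2 ^ t4 ≤ 3 * 2 ^ (m + 2) + 2 := by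
  have e3 : 2 ^ t3 ≤ 2 ^ (m+2) := Nat.pow_le_pow_right (by norm_num) h3
  have e4 : 2 ^ t4 ≤ 2 ^ (m+2) := Nat.pow_le_pow_right (by norm_num) h4
  have e1 : 2 ^ t1 ≤ 2 ^ (m+2) := Nat.pow_le_pow_right (by norm_num) h1
  have e2 : 2 ^ t2 ≤ 2 ^ (m+2) := Nat.pow_le_pow_right (by norm_num) h2
  rcases le_or_gt (t1 + t2) (m + 3) with h | h
  · have hc := conv2 h1 h2 (by omega)
    omega
  · have hc := conv2 h3 h4 (by omega)
    omega

end ArithAux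


section PowersetSums
variable {α : Type*} {M : Type*} [DecidableEq α] [AddCommMonoid M]

lemma sum_powerset_pair {x y : α} (hxy : x ≠ y) (f : Finset α → M) :
    ∑ Y ∈ ({x, y} : Finset α).powerset, f Y = f ∅ + f {y} + (f {x} + f {x, y}) := by
  rw [show ({x, y} : Finset α) = insert x {y} from rfl,
    Finset.sum_powerset_insert (by simpa using hxy),
    show ({y} : Finset α) = insert y (∅ : Finset α) by simp,
    Finset.sum_powerset_insert (by simp), Finset.sum_powerset_insert (by simp),
    Finset.powerset_empty, Finset.sum_singleton, Finset.sum_singleton]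
  simp [insert_empty_eq]

lemma sum_powerset_triple {x y z : α} (hxy : x ≠ y) (hxz : x ≠ z) (hyz : y ≠ z)
    (f : Finset α → M) :
    ∑ Y ∈ ({x, y, z} : Finset α).powerset, f Y =
      (f ∅ + f {z} + (f {y} + f {y, z})) + (f {x} + f {x, z} + (f {x, y} + f {x, y, z})) := by
  rw [show ({x, y, z} : Finset α) = insert x {y, z} from rfl,
    Finset.sum_powerset_insert (by simp [hxy, hxz]),
    sum_powerset_pair hyz, sum_powerset_pair hyz (fun Y => f (insert x Y))]
  simp only [insert_empty_eq]

lemma sum_powerset_quad {x y z w : α} (hxy : x ≠ y) (hxz : x ≠ z) (hxw : x ≠ w)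
    (hyz : y ≠ z) (hyw : y ≠ w) (hzw : z ≠ w) (f : Finset α → M) :
    ∑ Y ∈ ({x, y, z, w} : Finset α).powerset, f Y =
      ((f ∅ + f {w} + (f {z} + f {z, w})) + (f {y} + f {y, w} + (f {y, z} + f {y, z, w}))) +
      ((f {x} + f {x, w} + (f {x, z} + f {x, z, w})) +
        (f {x, y} + f {x, y, w} + (f {x, y, z} + f {x, y, z, w}))) := by
  rw [show ({x, y, z, w} : Finset α) = insert x {y, z, w} from rfl,
    Finset.sum_powerset_insert (by simp [hxy, hxz, hxw]),
    sum_powerset_triple hyz hyw hzw, sum_powerset_triple hyz hyw hzw (fun Y => f (insert x Y))]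
  simp only [insert_empty_eq]

end PowersetSums

section Decomp

variable {V : Type*} [Fintype V] (G : SimpleGraph V)

open Classical in
lemma numIndep_eq :
    numIndep G = #(univ.filter (fun s : Finset V => ∀ a ∈ s, ∀ b ∈ s, ¬ G.Adj a b)) := by
  rw [numIndep, Nat.card_eq_fintype_card]
  convert Fintype.card_subtype _

open Classical in
lemma indep_sum_decomp (A : Finset V) (hA : ∀ a ∈ A, ∀ b ∈ A, ¬ G.Adj a b) :
    numIndep G = ∑ Y ∈ Aᶜ.powerset,
      (if (∀ a ∈ Y, ∀ b ∈ Y, ¬ G.Adj a b) then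
        2 ^ #(A.filter fun a => ∀ y ∈ Y, ¬ G.Adj a y) else 0) := by
  rw [numIndep_eq]
  rw [Finset.card_eq_sum_card_fiberwise (f := fun s => s ∩ Aᶜ) (t := Aᶜ.powerset)
    (fun x _ => Finset.mem_powerset.2 Finset.inter_subset_right)]
  refine Finset.sum_congr rfl (fun Y hY => ?_)
  rw [Finset.filter_filter]
  have hYB : Y ⊆ Aᶜ := Finset.mem_powerset.1 hY
  by_cases hind : ∀ a ∈ Y, ∀ b ∈ Y, ¬ G.Adj a b
  · rw [if_pos hind, ← Finset.card_powerset]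
    apply Finset.card_nbij' (fun s => s ∩ A) (fun Z => Y ∪ Z)
    · intro s hs
      simp only [Finset.mem_coe, Finset.mem_filter, Finset.mem_univ, true_and] at hs
      obtain ⟨hsind, hsY⟩ := hs
      refine Finset.mem_powerset.2 ?_
      intro a ha
      simp only [Finset.mem_inter] at ha
      refine Finset.mem_filter.2 ⟨ha.2, fun y hy => ?_⟩
      have hys : y ∈ s := by
        have : y ∈ s ∩ Aᶜ := hsY ▸ hy
        exact (Finset.mem_inter.1 this).1
      exact hsind a ha.1 y hys
    · intro Z hZ
      simp only [Finset.mem_coe, Finset.mem_powerset] at hZ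
      have hZA : Z ⊆ A := fun z hz => (Finset.mem_filter.1 (hZ hz)).1
      simp only [Finset.mem_coe, Finset.mem_filter, Finset.mem_univ, true_and]
      constructor
      · intro a ha b hb
        rcases Finset.mem_union.1 ha with ha' | ha' <;> rcases Finset.mem_union.1 hb with hb' | hb'
        · exact hind a ha' b hb'
        · intro hadj
          exact (Finset.mem_filter.1 (hZ hb')).2 a ha' hadj.symm
        · exact (Finset.mem_filter.1 (hZ ha')).2 b hb'
        · exact hA a (hZA ha') b (hZA hb')
      · ext x
        simp only [Finset.mem_inter, Finset.mem_union, Finset.mem_compl]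
        constructor
        · rintro ⟨hx1 | hx1, hx2⟩
          · exact hx1
          · exact absurd (hZA hx1) hx2
        · intro hx
          exact ⟨Or.inl hx, Finset.mem_compl.1 (hYB hx)⟩
    · intro s hs
      simp only [Finset.mem_coe, Finset.mem_filter, Finset.mem_univ, true_and] at hs
      ext x
      simp only [Finset.mem_union, Finset.mem_inter]
      constructor
      · rintro (hx | ⟨hx, _⟩)
        · have : x ∈ s ∩ Aᶜ := hs.2 ▸ hx
          exact (Finset.mem_inter.1 this).1
        · exact hx
      · intro hx
        by_cases hxA : x ∈ A
        · exact Or.inr ⟨hx, hxA⟩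
        · left; rw [← hs.2]; exact Finset.mem_inter.2 ⟨hx, Finset.mem_compl.2 hxA⟩
    · intro Z hZ
      simp only [Finset.mem_coe, Finset.mem_powerset] at hZ
      have hZA : Z ⊆ A := fun z hz => (Finset.mem_filter.1 (hZ hz)).1
      ext x
      simp only [Finset.mem_inter, Finset.mem_union]
      constructor
      · rintro ⟨hx | hx, hx2⟩
        · exact absurd hx2 (Finset.mem_compl.1 (hYB hx))
        · exact hx
      · intro hx
        exact ⟨Or.inr hx, hZA hx⟩
  · rw [if_neg hind]
    rw [Finset.card_eq_zero, Finset.filter_eq_empty_iff]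
    rintro s - ⟨hsind, hsY⟩
    apply hind
    intro a ha b hb
    have ha' : a ∈ s := by have : a ∈ s ∩ Aᶜ := hsY ▸ ha; exact (Finset.mem_inter.1 this).1
    have hb' : b ∈ s := by have : b ∈ s ∩ Aᶜ := hsY ▸ hb; exact (Finset.mem_inter.1 this).1
    exact hsind a ha' b hb'

end Decomp

section Graph
variable {V : Type*} [Fintype V] {G : SimpleGraph V}

open Classical in
lemma min_degree_two (hcard : 4 ≤ Fintype.card V) (hconn : LConnected G 2) (v : V) :
    ∃ u1 u2 : V, u1 ≠ u2 ∧ G.Adj v u1 ∧ G.Adj v u2 := by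
  by_contra hcon
  push_neg at hcon
  -- every pair of neighbors of v coincide
  have huniq : ∀ u1 u2 : V, G.Adj v u1 → G.Adj v u2 → u1 = u2 := by
    intro u1 u2 h1 h2
    by_contra hne
    exact hcon u1 u2 hne h1 h2
  by_cases hw : ∃ w, G.Adj v w
  · obtain ⟨w, hvw⟩ := hw
    have hc := hconn.2 {w} (by simp)
    have hvS : v ∈ ((↑({w} : Finset V) : Set V))ᶜ := by
      simp only [Finset.coe_singleton, Set.mem_compl_iff, Set.mem_singleton_iff]
      exact fun h => G.ne_of_adj hvw h
    -- find u outside {v, w}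
    have hcompl : 0 < #({v, w}ᶜ : Finset V) := by
      have h1 : #({v, w} : Finset V) ≤ 2 := Finset.card_insert_le _ _ |>.trans (by simp)
      have := Finset.card_add_card_compl ({v, w} : Finset V)
      omega
    obtain ⟨u, hu⟩ := Finset.card_pos.1 hcompl
    simp only [Finset.mem_compl, Finset.mem_insert, Finset.mem_singleton] at hu
    push_neg at hu
    have huS : u ∈ ((↑({w} : Finset V) : Set V))ᶜ := by
      simp only [Finset.coe_singleton, Set.mem_compl_iff, Set.mem_singleton_iff]
      exact hu.2
    obtain ⟨p⟩ := hc.preconnected ⟨v, hvS⟩ ⟨u, huS⟩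
    have hne : (⟨v, hvS⟩ : ↥((↑({w} : Finset V) : Set V)ᶜ)) ≠ ⟨u, huS⟩ := by
      simp only [ne_eq, Subtype.mk.injEq]
      exact fun h => hu.1 h.symm
    have hnil := SimpleGraph.Walk.not_nil_of_ne (p := p) hne
    have hadj := (p.firstDart hnil).adj
    have hadj' : G.Adj v ↑(p.getVert 1) := hadj
    have : ↑(p.getVert 1) = w := huniq _ w hadj' hvw
    have hmem := (p.getVert 1).2
    simp only [Finset.coe_singleton, Set.mem_compl_iff, Set.mem_singleton_iff] at hmem
    exact hmem this
  · push_neg at hw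
    have hc := hconn.2 ∅ (by simp)
    have hvS : v ∈ ((↑(∅ : Finset V) : Set V))ᶜ := by simp
    obtain ⟨u, hu⟩ := Fintype.exists_ne_of_one_lt_card (by omega) v
    have huS : u ∈ ((↑(∅ : Finset V) : Set V))ᶜ := by simp
    obtain ⟨p⟩ := hc.preconnected ⟨v, hvS⟩ ⟨u, huS⟩
    have hne : (⟨v, hvS⟩ : ↥((↑(∅ : Finset V) : Set V)ᶜ)) ≠ ⟨u, huS⟩ := by
      simp only [ne_eq, Subtype.mk.injEq]
      exact fun h => hu h.symm
    have hnil := SimpleGraph.Walk.not_nil_of_ne (p := p) hne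
    have hadj := (p.firstDart hnil).adj
    exact hw _ hadj

open Classical in
lemma exists_edge_in_compl (hchrom : ¬ G.Colorable 2) (A : Finset V)
    (hA : ∀ a ∈ A, ∀ b ∈ A, ¬ G.Adj a b) :
    ∃ x ∈ Aᶜ, ∃ y ∈ Aᶜ, G.Adj x y := by
  by_contra h
  push_neg at h
  apply hchrom
  have C : G.Coloring Bool := SimpleGraph.Coloring.mk (fun v => decide (v ∈ A)) ?_
  · have := C.colorable
    simpa using this
  · intro v w hadj heq
    by_cases hv : v ∈ A <;> by_cases hw : w ∈ A
    · exact hA v hv w hw hadj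
    · simp [hv, hw] at heq
    · simp [hv, hw] at heq
    · exact h v (Finset.mem_compl.2 hv) w (Finset.mem_compl.2 hw) hadj

open Classical in
lemma exchange_le {A : Finset V} (hA : ∀ a ∈ A, ∀ b ∈ A, ¬ G.Adj a b)
    (hmax : ∀ s : Finset V, (∀ a ∈ s, ∀ b ∈ s, ¬ G.Adj a b) → #s ≤ #A)
    {Y : Finset V} (hYB : Y ⊆ Aᶜ) (hYind : ∀ a ∈ Y, ∀ b ∈ Y, ¬ G.Adj a b) :
    #(A.filter fun a => ∀ y ∈ Y, ¬ G.Adj a y) + #Y ≤ #A := by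
  set Z := A.filter fun a => ∀ y ∈ Y, ¬ G.Adj a y with hZ
  have hZA : Z ⊆ A := Finset.filter_subset _ _
  have hdisj : Disjoint Z Y := by
    rw [Finset.disjoint_left]
    intro a haZ haY
    exact Finset.mem_compl.1 (hYB haY) (hZA haZ)
  have hind : ∀ a ∈ Z ∪ Y, ∀ b ∈ Z ∪ Y, ¬ G.Adj a b := by
    intro a ha b hb
    rcases Finset.mem_union.1 ha with ha' | ha' <;> rcases Finset.mem_union.1 hb with hb' | hb'
    · exact hA a (hZA ha') b (hZA hb')
    · exact (Finset.mem_filter.1 ha').2 b hb'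
    · intro hadj
      exact (Finset.mem_filter.1 hb').2 a ha' hadj.symm
    · exact hYind a ha' b hb'
  have := hmax _ hind
  rwa [Finset.card_union_of_disjoint hdisj] at this

end Graph


section MainBound

variable {V : Type*} [Fintype V]

open Classical in
lemma main_bound (G : SimpleGraph V) (n : ℕ) (hn : 4 ≤ n) (hn5 : n ≠ 5)
    (hcard : Fintype.card V = n)
    (hdeg : ∀ v : V, ∃ u1 u2 : V, u1 ≠ u2 ∧ G.Adj v u1 ∧ G.Adj v u2)
    (hnonbip : ¬ G.Colorable 2) :
    numIndep G ≤ 2 ^ (n - 2) + 2 := by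
  have hnefil : ((univ : Finset (Finset V)).filter fun s => ∀ a ∈ s, ∀ b ∈ s, ¬ G.Adj a b).Nonempty :=
    ⟨∅, by simp⟩
  obtain ⟨A, hAmem, hAmax⟩ := Finset.exists_max_image _ Finset.card hnefil
  have hA : ∀ a ∈ A, ∀ b ∈ A, ¬ G.Adj a b := by
    have := (Finset.mem_filter.1 hAmem).2
    exact this
  have hmax : ∀ s : Finset V, (∀ a ∈ s, ∀ b ∈ s, ¬ G.Adj a b) → #s ≤ #A :=
    fun s hs => hAmax s (Finset.mem_filter.2 ⟨Finset.mem_univ _, hs⟩)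
  have hV : 0 < Fintype.card V := by omega
  have hα1 : 1 ≤ #A := by
    obtain ⟨v⟩ := Fintype.card_pos_iff.1 hV
    have := hmax {v} (by
      intro a ha b hb
      rw [Finset.mem_singleton] at ha hb
      subst ha; subst hb
      exact fun h => G.ne_of_adj h rfl)
    simpa using this
  have hcardsplit : #A + #Aᶜ = n := by rw [Finset.card_add_card_compl, hcard]
  have hnbrs : ∀ a ∈ A, ∃ u1 u2 : V, u1 ≠ u2 ∧ u1 ∈ Aᶜ ∧ u2 ∈ Aᶜ ∧ G.Adj a u1 ∧ G.Adj a u2 := by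
    intro a ha
    obtain ⟨u1, u2, h12, h1, h2⟩ := hdeg a
    refine ⟨u1, u2, h12, ?_, ?_, h1, h2⟩
    · exact Finset.mem_compl.2 (fun hu => hA a ha u1 hu h1)
    · exact Finset.mem_compl.2 (fun hu => hA a ha u2 hu h2)
  rw [indep_sum_decomp G A hA]
  by_cases hβ5 : 5 ≤ #Aᶜ
  · -- large complement
    set β := #Aᶜ with hβ
    have key : (∑ Y ∈ Aᶜ.powerset,
        (if (∀ a ∈ Y, ∀ b ∈ Y, ¬ G.Adj a b) then
          2 ^ #(A.filter fun a => ∀ y ∈ Y, ¬ G.Adj a y) else 0)) * 2 ^ β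
        ≤ 2 ^ #A * 3 ^ β := by
      rw [Finset.sum_mul]
      have hsum3 : ∑ Y ∈ Aᶜ.powerset, 2 ^ #A * 2 ^ (β - #Y) = 2 ^ #A * 3 ^ β := by
        rw [← Finset.mul_sum]
        congr 1
        have h := Finset.prod_add (fun _ : V => (1:ℕ)) (fun _ => 2) Aᶜ
        simp only [Finset.prod_const, one_pow, one_mul] at h
        rw [show ((1:ℕ)+2) = 3 by norm_num] at h
        rw [h]
        refine Finset.sum_congr rfl (fun Y hY => ?_)
        rw [Finset.card_sdiff_of_subset (Finset.mem_powerset.1 hY)]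
      rw [← hsum3]
      refine Finset.sum_le_sum (fun Y hY => ?_)
      have hYB : Y ⊆ Aᶜ := Finset.mem_powerset.1 hY
      have hYβ : #Y ≤ β := Finset.card_le_card hYB
      split_ifs with hind
      · have hex := exchange_le hA hmax hYB hind
        rw [← pow_add, ← pow_add]
        exact Nat.pow_le_pow_right (by norm_num) (by omega)
      · rw [zero_mul]; exact Nat.zero_le _
    have key2 : 2 ^ #A * 3 ^ β ≤ (2 ^ (n - 2) + 2) * 2 ^ β := by
      have h34 : 3 ^ β * 4 ≤ 4 ^ β := three_pow_le hβ5
      have e1 : (2:ℕ) ^ (n - 2) * 2 ^ β * 4 = 2 ^ #A * 4 ^ β := by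
        have hee : n - 2 + β + 2 = #A + 2 * β := by omega
        calc (2:ℕ) ^ (n - 2) * 2 ^ β * 4 = 2 ^ (n - 2 + β + 2) := by
              rw [pow_add, pow_add]; norm_num
          _ = 2 ^ (#A + 2 * β) := by rw [hee]
          _ = 2 ^ #A * 4 ^ β := by
              rw [pow_add, pow_mul]; norm_num
      have h2 : 2 ^ #A * 3 ^ β * 4 ≤ 2 ^ #A * 4 ^ β := by
        calc 2 ^ #A * 3 ^ β * 4 = 2 ^ #A * (3 ^ β * 4) := by ring
          _ ≤ 2 ^ #A * 4 ^ β := Nat.mul_le_mul_left _ h34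
      have h3 : 2 ^ #A * 3 ^ β * 4 ≤ 2 ^ (n-2) * 2 ^ β * 4 := by rw [e1]; exact h2
      have h4 : 2 ^ #A * 3 ^ β ≤ 2 ^ (n-2) * 2 ^ β := Nat.le_of_mul_le_mul_right h3 (by norm_num)
      calc 2 ^ #A * 3 ^ β ≤ 2 ^ (n-2) * 2 ^ β := h4
        _ ≤ (2 ^ (n - 2) + 2) * 2 ^ β := by
            apply Nat.mul_le_mul_right
            omega
    have hfin := key.trans key2
    exact Nat.le_of_mul_le_mul_right hfin (Nat.pow_pos (by norm_num))
  · -- small complement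
    push_neg at hβ5
    obtain ⟨x, hxB, y, hyB, hxy⟩ := exists_edge_in_compl hnonbip A hA
    have hxyne : x ≠ y := G.ne_of_adj hxy
    have hsub2 : ({x, y} : Finset V) ⊆ Aᶜ := by
      intro a ha
      rcases Finset.mem_insert.1 ha with rfl | ha
      · exact hxB
      · rw [Finset.mem_singleton.1 ha]; exact hyB
    have hcard2 : #({x, y} : Finset V) = 2 := by
      rw [Finset.card_insert_of_notMem (by simpa using hxyne), Finset.card_singleton]
    have hβ2 : 2 ≤ #Aᶜ := hcard2 ▸ Finset.card_le_card hsub2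
    have hnind : ∀ Y : Finset V, x ∈ Y → y ∈ Y → ¬(∀ a ∈ Y, ∀ b ∈ Y, ¬ G.Adj a b) :=
      fun Y hx hy h => h x hx y hy hxy
    have hsingleind : ∀ v : V, ∀ a ∈ ({v} : Finset V), ∀ b ∈ ({v} : Finset V), ¬ G.Adj a b := by
      intro v a ha b hb
      rw [Finset.mem_singleton] at ha hb
      subst ha; subst hb
      exact fun h => G.ne_of_adj h rfl
    have hemptyind : ∀ a ∈ (∅ : Finset V), ∀ b ∈ (∅ : Finset V), ¬ G.Adj a b := by simp
    have ht0 : (A.filter fun a => ∀ y' ∈ (∅ : Finset V), ¬ G.Adj a y') = A :=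
      Finset.filter_true_of_mem (fun a _ => by simp)
    have hβc : #Aᶜ = 2 ∨ #Aᶜ = 3 ∨ #Aᶜ = 4 := by omega
    rcases hβc with hβc | hβc | hβc
    · -- β = 2
      have hBeq : Aᶜ = ({x, y} : Finset V) :=
        (Finset.eq_of_subset_of_card_le hsub2 (by omega)).symm
      have hall : ∀ a ∈ A, G.Adj a x ∧ G.Adj a y := by
        intro a ha
        obtain ⟨u1, u2, h12, hu1, hu2, ha1, ha2⟩ := hnbrs a ha
        rw [hBeq] at hu1 hu2
        simp only [Finset.mem_insert, Finset.mem_singleton] at hu1 hu2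
        rcases hu1 with rfl | rfl <;> rcases hu2 with rfl | rfl
        · exact absurd rfl h12
        · exact ⟨ha1, ha2⟩
        · exact ⟨ha2, ha1⟩
        · exact absurd rfl h12
      have htx : (A.filter fun a => ∀ y' ∈ ({x} : Finset V), ¬ G.Adj a y') = ∅ := by
        rw [Finset.filter_eq_empty_iff]
        intro a ha h
        exact h x (Finset.mem_singleton_self x) (hall a ha).1
      have hty : (A.filter fun a => ∀ y' ∈ ({y} : Finset V), ¬ G.Adj a y') = ∅ := by
        rw [Finset.filter_eq_empty_iff]
        intro a ha h
        exact h y (Finset.mem_singleton_self y) (hall a ha).2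
      rw [hBeq, sum_powerset_pair hxyne]
      rw [if_pos hemptyind, if_pos (hsingleind y), if_pos (hsingleind x),
        if_neg (hnind _ (Finset.mem_insert_self x {y}) (by simp)), ht0, htx, hty]
      have hne2 : n - 2 = #A := by omega
      rw [hne2]
      simp
    · -- β = 3
      obtain ⟨z, hz⟩ := Finset.card_eq_one.1
        (show #(Aᶜ \ ({x, y} : Finset V)) = 1 by rw [Finset.card_sdiff_of_subset hsub2]; omega)
      have hzmem : z ∈ Aᶜ \ ({x, y} : Finset V) := hz ▸ Finset.mem_singleton_self z
      have hzB : z ∈ Aᶜ := (Finset.mem_sdiff.1 hzmem).1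
      have hzxy : z ≠ x ∧ z ≠ y := by
        have := (Finset.mem_sdiff.1 hzmem).2
        simp only [Finset.mem_insert, Finset.mem_singleton] at this
        tauto
      have hxz : x ≠ z := hzxy.1.symm
      have hyz : y ≠ z := hzxy.2.symm
      have hsub3 : ({x, y, z} : Finset V) ⊆ Aᶜ := by
        intro a ha
        simp only [Finset.mem_insert, Finset.mem_singleton] at ha
        rcases ha with rfl | rfl | rfl
        · exact hxB
        · exact hyB
        · exact hzB
      have hcard3 : #({x, y, z} : Finset V) = 3 := by
        rw [Finset.card_insert_of_notMem (by simp [hxyne, hxz]),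
          Finset.card_insert_of_notMem (by simp [hyz]), Finset.card_singleton]
      have hBeq : Aᶜ = ({x, y, z} : Finset V) :=
        (Finset.eq_of_subset_of_card_le hsub3 (by omega)).symm
      -- single exchanges
      have hexx : #(A.filter fun a => ∀ y' ∈ ({x} : Finset V), ¬ G.Adj a y') + 1 ≤ #A := by
        have := exchange_le hA hmax (Finset.singleton_subset_iff.2 hxB) (hsingleind x)
        simpa using this
      have hexy : #(A.filter fun a => ∀ y' ∈ ({y} : Finset V), ¬ G.Adj a y') + 1 ≤ #A := by
        have := exchange_le hA hmax (Finset.singleton_subset_iff.2 hyB) (hsingleind y)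
        simpa using this
      have hexz : #(A.filter fun a => ∀ y' ∈ ({z} : Finset V), ¬ G.Adj a y') + 1 ≤ #A := by
        have := exchange_le hA hmax (Finset.singleton_subset_iff.2 hzB) (hsingleind z)
        simpa using this
      -- double counting: sum of the three single counts is at most #A
      have hdc : #(A.filter fun a => ∀ y' ∈ ({x} : Finset V), ¬ G.Adj a y') +
          #(A.filter fun a => ∀ y' ∈ ({y} : Finset V), ¬ G.Adj a y') +
          #(A.filter fun a => ∀ y' ∈ ({z} : Finset V), ¬ G.Adj a y') ≤ #A := by
        rw [Finset.card_filter, Finset.card_filter, Finset.card_filter,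
          ← Finset.sum_add_distrib, ← Finset.sum_add_distrib]
        have hpt : ∀ a ∈ A,
            ((if (∀ y' ∈ ({x} : Finset V), ¬ G.Adj a y') then 1 else 0) +
              (if (∀ y' ∈ ({y} : Finset V), ¬ G.Adj a y') then 1 else 0) +
              (if (∀ y' ∈ ({z} : Finset V), ¬ G.Adj a y') then 1 else 0) : ℕ) ≤ 1 := by
          intro a ha
          obtain ⟨u1, u2, h12, hu1, hu2, ha1, ha2⟩ := hnbrs a ha
          rw [hBeq] at hu1 hu2
          simp only [Finset.mem_insert, Finset.mem_singleton] at hu1 hu2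
          simp only [Finset.mem_singleton, forall_eq]
          rcases hu1 with rfl | rfl | rfl <;> rcases hu2 with rfl | rfl | rfl <;>
            first
              | exact absurd rfl h12
              | (rw [if_neg (not_not_intro ha1), if_neg (not_not_intro ha2)]
                 split_ifs <;> norm_num)
        calc ∑ a ∈ A, ((if (∀ y' ∈ ({x} : Finset V), ¬ G.Adj a y') then 1 else 0) +
              (if (∀ y' ∈ ({y} : Finset V), ¬ G.Adj a y') then 1 else 0) +
              (if (∀ y' ∈ ({z} : Finset V), ¬ G.Adj a y') then 1 else 0) : ℕ)
            ≤ ∑ _a ∈ A, 1 := Finset.sum_le_sum hpt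
          _ = #A := by simp
      -- pairs inside a 3-element complement: the compatible set is empty
      have hpz : ∀ u v : V, u ∈ Aᶜ → v ∈ Aᶜ → u ≠ v →
          (A.filter fun a => ∀ y' ∈ ({u, v} : Finset V), ¬ G.Adj a y') = ∅ := by
        intro u v huB hvB huv
        rw [Finset.filter_eq_empty_iff]
        intro a ha h
        have hnu : ¬ G.Adj a u := h u (Finset.mem_insert_self u {v})
        have hnv : ¬ G.Adj a v := h v (by simp)
        obtain ⟨u1, u2, h12, hu1, hu2, ha1, ha2⟩ := hnbrs a ha
        have huvsub : ({u, v} : Finset V) ⊆ Aᶜ := by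
          intro b hb
          rcases Finset.mem_insert.1 hb with rfl | hb
          · exact huB
          · rw [Finset.mem_singleton.1 hb]; exact hvB
        have hcduv : #({u, v} : Finset V) = 2 := by
          rw [Finset.card_insert_of_notMem (by simpa using huv), Finset.card_singleton]
        have hsd : #(Aᶜ \ ({u, v} : Finset V)) = 1 := by
          rw [Finset.card_sdiff_of_subset huvsub]; omega
        have hm1 : u1 ∈ Aᶜ \ ({u, v} : Finset V) := by
          refine Finset.mem_sdiff.2 ⟨hu1, ?_⟩
          simp only [Finset.mem_insert, Finset.mem_singleton]
          rintro (rfl | rfl)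
          · exact hnu ha1
          · exact hnv ha1
        have hm2 : u2 ∈ Aᶜ \ ({u, v} : Finset V) := by
          refine Finset.mem_sdiff.2 ⟨hu2, ?_⟩
          simp only [Finset.mem_insert, Finset.mem_singleton]
          rintro (rfl | rfl)
          · exact hnu ha2
          · exact hnv ha2
        obtain ⟨c, hc⟩ := Finset.card_eq_one.1 hsd
        rw [hc, Finset.mem_singleton] at hm1 hm2
        exact h12 (hm1.trans hm2.symm)
      rw [hBeq, sum_powerset_triple hxyne hxz hyz]
      rw [if_pos hemptyind, if_pos (hsingleind x), if_pos (hsingleind y), if_pos (hsingleind z),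
        if_neg (hnind ({x, y} : Finset V) (by simp) (by simp)),
        if_neg (hnind ({x, y, z} : Finset V) (by simp) (by simp)), ht0]
      have hpairyz : (if (∀ a ∈ ({y, z} : Finset V), ∀ b ∈ ({y, z} : Finset V), ¬ G.Adj a b) then
          2 ^ #(A.filter fun a => ∀ y' ∈ ({y, z} : Finset V), ¬ G.Adj a y') else 0) ≤ 1 := by
        split_ifs with h
        · rw [hpz y z hyB hzB hyz]
          simp
        · exact Nat.zero_le _
      have hpairxz : (if (∀ a ∈ ({x, z} : Finset V), ∀ b ∈ ({x, z} : Finset V), ¬ G.Adj a b) then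
          2 ^ #(A.filter fun a => ∀ y' ∈ ({x, z} : Finset V), ¬ G.Adj a y') else 0) ≤ 1 := by
        split_ifs with h
        · rw [hpz x z hxB hzB hxz]
          simp
        · exact Nat.zero_le _
      have hαc : #A = 1 ∨ #A = 2 ∨ 3 ≤ #A := by omega
      rcases hαc with hα | hα | hα
      · -- n = 4
        have hyzzero : (if (∀ a ∈ ({y, z} : Finset V), ∀ b ∈ ({y, z} : Finset V), ¬ G.Adj a b) then
            2 ^ #(A.filter fun a => ∀ y' ∈ ({y, z} : Finset V), ¬ G.Adj a y') else 0) = 0 := by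
          split_ifs with h
          · exfalso
            have := exchange_le hA hmax (by
              intro b hb
              rcases Finset.mem_insert.1 hb with rfl | hb
              · exact hyB
              · rw [Finset.mem_singleton.1 hb]; exact hzB) h
            rw [Finset.card_insert_of_notMem (by simpa using hyz), Finset.card_singleton] at this
            omega
          · rfl
        have hxzzero : (if (∀ a ∈ ({x, z} : Finset V), ∀ b ∈ ({x, z} : Finset V), ¬ G.Adj a b) then
            2 ^ #(A.filter fun a => ∀ y' ∈ ({x, z} : Finset V), ¬ G.Adj a y') else 0) = 0 := by
          split_ifs with h
          · exfalso
            have := exchange_le hA hmax (by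
              intro b hb
              rcases Finset.mem_insert.1 hb with rfl | hb
              · exact hxB
              · rw [Finset.mem_singleton.1 hb]; exact hzB) h
            rw [Finset.card_insert_of_notMem (by simpa using hxz), Finset.card_singleton] at this
            omega
          · rfl
        rw [hyzzero, hxzzero]
        have e1 : (2:ℕ) ^ #A = 2 := by rw [hα]; norm_num
        have e2 : n - 2 = 2 := by omega
        have b1 : (2:ℕ) ^ #(A.filter fun a => ∀ y' ∈ ({x} : Finset V), ¬ G.Adj a y') ≤ 1 := by
          have : #(A.filter fun a => ∀ y' ∈ ({x} : Finset V), ¬ G.Adj a y') = 0 := by omega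
          rw [this]
          norm_num
        have b2 : (2:ℕ) ^ #(A.filter fun a => ∀ y' ∈ ({y} : Finset V), ¬ G.Adj a y') ≤ 1 := by
          have : #(A.filter fun a => ∀ y' ∈ ({y} : Finset V), ¬ G.Adj a y') = 0 := by omega
          rw [this]
          norm_num
        have b3 : (2:ℕ) ^ #(A.filter fun a => ∀ y' ∈ ({z} : Finset V), ¬ G.Adj a y') ≤ 1 := by
          have : #(A.filter fun a => ∀ y' ∈ ({z} : Finset V), ¬ G.Adj a y') = 0 := by omega
          rw [this]
          norm_num
        rw [e2]
        have e3 : (2:ℕ) ^ 2 = 4 := by norm_num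
        omega
      · -- n = 5 : excluded
        exact absurd (by omega : n = 5) hn5
      · -- main subcase
        obtain ⟨m, hm⟩ := Nat.exists_eq_add_of_le hα
        have hsing := single3 (m := m)
          (t1 := #(A.filter fun a => ∀ y' ∈ ({x} : Finset V), ¬ G.Adj a y'))
          (t2 := #(A.filter fun a => ∀ y' ∈ ({y} : Finset V), ¬ G.Adj a y'))
          (t3 := #(A.filter fun a => ∀ y' ∈ ({z} : Finset V), ¬ G.Adj a y'))
          (by omega) (by omega) (by omega) (by omega)
        have hA3 : (2:ℕ) ^ #A = 2 ^ (m + 3) := by rw [show #A = m + 3 by omega]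
        have hn2 : n - 2 = m + 4 := by omega
        rw [hn2, hA3]
        have e54 : (2:ℕ) ^ (m + 4) = 2 ^ (m + 3) * 2 := by
          rw [show m + 4 = (m + 3) + 1 from rfl, pow_succ]
        omega
    · -- β = 4
      obtain ⟨z, w, hzw, hzwset⟩ := Finset.card_eq_two.1
        (show #(Aᶜ \ ({x, y} : Finset V)) = 2 by rw [Finset.card_sdiff_of_subset hsub2]; omega)
      have hzmem : z ∈ Aᶜ \ ({x, y} : Finset V) := by rw [hzwset]; simp
      have hwmem : w ∈ Aᶜ \ ({x, y} : Finset V) := by rw [hzwset]; simp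
      have hzB : z ∈ Aᶜ := (Finset.mem_sdiff.1 hzmem).1
      have hwB : w ∈ Aᶜ := (Finset.mem_sdiff.1 hwmem).1
      have hzxy : z ≠ x ∧ z ≠ y := by
        have := (Finset.mem_sdiff.1 hzmem).2
        simp only [Finset.mem_insert, Finset.mem_singleton] at this
        tauto
      have hwxy : w ≠ x ∧ w ≠ y := by
        have := (Finset.mem_sdiff.1 hwmem).2
        simp only [Finset.mem_insert, Finset.mem_singleton] at this
        tauto
      have hxz : x ≠ z := hzxy.1.symm
      have hyz : y ≠ z := hzxy.2.symm
      have hxw : x ≠ w := hwxy.1.symm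
      have hyw : y ≠ w := hwxy.2.symm
      have hsub4 : ({x, y, z, w} : Finset V) ⊆ Aᶜ := by
        intro a ha
        simp only [Finset.mem_insert, Finset.mem_singleton] at ha
        rcases ha with rfl | rfl | rfl | rfl
        · exact hxB
        · exact hyB
        · exact hzB
        · exact hwB
      have hcard4 : #({x, y, z, w} : Finset V) = 4 := by
        rw [Finset.card_insert_of_notMem (by simp [hxyne, hxz, hxw]),
          Finset.card_insert_of_notMem (by simp [hyz, hyw]),
          Finset.card_insert_of_notMem (by simp [hzw]), Finset.card_singleton]
      have hBeq : Aᶜ = ({x, y, z, w} : Finset V) :=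
        (Finset.eq_of_subset_of_card_le hsub4 (by omega)).symm
      -- single exchanges
      have hexx : #(A.filter fun a => ∀ y' ∈ ({x} : Finset V), ¬ G.Adj a y') + 1 ≤ #A := by
        have := exchange_le hA hmax (Finset.singleton_subset_iff.2 hxB) (hsingleind x)
        simpa using this
      have hexy : #(A.filter fun a => ∀ y' ∈ ({y} : Finset V), ¬ G.Adj a y') + 1 ≤ #A := by
        have := exchange_le hA hmax (Finset.singleton_subset_iff.2 hyB) (hsingleind y)
        simpa using this
      have hexz : #(A.filter fun a => ∀ y' ∈ ({z} : Finset V), ¬ G.Adj a y') + 1 ≤ #A := by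
        have := exchange_le hA hmax (Finset.singleton_subset_iff.2 hzB) (hsingleind z)
        simpa using this
      have hexw : #(A.filter fun a => ∀ y' ∈ ({w} : Finset V), ¬ G.Adj a y') + 1 ≤ #A := by
        have := exchange_le hA hmax (Finset.singleton_subset_iff.2 hwB) (hsingleind w)
        simpa using this
      -- double counting
      have hdc : #(A.filter fun a => ∀ y' ∈ ({x} : Finset V), ¬ G.Adj a y') +
          #(A.filter fun a => ∀ y' ∈ ({y} : Finset V), ¬ G.Adj a y') +
          #(A.filter fun a => ∀ y' ∈ ({z} : Finset V), ¬ G.Adj a y') +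
          #(A.filter fun a => ∀ y' ∈ ({w} : Finset V), ¬ G.Adj a y') ≤ 2 * #A := by
        rw [Finset.card_filter, Finset.card_filter, Finset.card_filter, Finset.card_filter,
          ← Finset.sum_add_distrib, ← Finset.sum_add_distrib, ← Finset.sum_add_distrib]
        have hpt : ∀ a ∈ A,
            ((if (∀ y' ∈ ({x} : Finset V), ¬ G.Adj a y') then 1 else 0) +
              (if (∀ y' ∈ ({y} : Finset V), ¬ G.Adj a y') then 1 else 0) +
              (if (∀ y' ∈ ({z} : Finset V), ¬ G.Adj a y') then 1 else 0) +
              (if (∀ y' ∈ ({w} : Finset V), ¬ G.Adj a y') then 1 else 0) : ℕ) ≤ 2 := by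
          intro a ha
          obtain ⟨u1, u2, h12, hu1, hu2, ha1, ha2⟩ := hnbrs a ha
          rw [hBeq] at hu1 hu2
          simp only [Finset.mem_insert, Finset.mem_singleton] at hu1 hu2
          simp only [Finset.mem_singleton, forall_eq]
          rcases hu1 with rfl | rfl | rfl | rfl <;> rcases hu2 with rfl | rfl | rfl | rfl <;>
            first
              | exact absurd rfl h12
              | (rw [if_neg (not_not_intro ha1), if_neg (not_not_intro ha2)]
                 split_ifs <;> norm_num)
        calc ∑ a ∈ A, ((if (∀ y' ∈ ({x} : Finset V), ¬ G.Adj a y') then 1 else 0) +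
              (if (∀ y' ∈ ({y} : Finset V), ¬ G.Adj a y') then 1 else 0) +
              (if (∀ y' ∈ ({z} : Finset V), ¬ G.Adj a y') then 1 else 0) +
              (if (∀ y' ∈ ({w} : Finset V), ¬ G.Adj a y') then 1 else 0) : ℕ)
            ≤ ∑ _a ∈ A, 2 := Finset.sum_le_sum hpt
          _ = 2 * #A := by rw [Finset.sum_const, smul_eq_mul, mul_comm]
      -- generic bound for a pair term
      have hpairb : ∀ u v : V, u ∈ Aᶜ → v ∈ Aᶜ → u ≠ v → ∀ N : ℕ, #A ≤ N + 2 →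
          (if (∀ a ∈ ({u, v} : Finset V), ∀ b ∈ ({u, v} : Finset V), ¬ G.Adj a b) then
            2 ^ #(A.filter fun a => ∀ y' ∈ ({u, v} : Finset V), ¬ G.Adj a y') else 0) ≤ 2 ^ N := by
        intro u v huB hvB huv N hN
        split_ifs with h
        · have hsub : ({u, v} : Finset V) ⊆ Aᶜ := by
            intro b hb
            rcases Finset.mem_insert.1 hb with rfl | hb
            · exact huB
            · rw [Finset.mem_singleton.1 hb]; exact hvB
          have hex := exchange_le hA hmax hsub h
          rw [Finset.card_insert_of_notMem (by simpa using huv), Finset.card_singleton] at hex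
          exact Nat.pow_le_pow_right (by norm_num) (by omega)
        · exact Nat.zero_le _
      -- generic bound for a triple term
      have htripb : ∀ u v s : V, u ∈ Aᶜ → v ∈ Aᶜ → s ∈ Aᶜ → u ≠ v → u ≠ s → v ≠ s →
          ∀ N : ℕ, #A ≤ N + 3 →
          (if (∀ a ∈ ({u, v, s} : Finset V), ∀ b ∈ ({u, v, s} : Finset V), ¬ G.Adj a b) then
            2 ^ #(A.filter fun a => ∀ y' ∈ ({u, v, s} : Finset V), ¬ G.Adj a y') else 0) ≤ 2 ^ N := by
        intro u v s huB hvB hsB huv hus hvs N hN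
        split_ifs with h
        · have hsub : ({u, v, s} : Finset V) ⊆ Aᶜ := by
            intro b hb
            simp only [Finset.mem_insert, Finset.mem_singleton] at hb
            rcases hb with rfl | rfl | rfl
            · exact huB
            · exact hvB
            · exact hsB
          have hex := exchange_le hA hmax hsub h
          rw [Finset.card_insert_of_notMem (by simp [huv, hus]),
            Finset.card_insert_of_notMem (by simp [hvs]), Finset.card_singleton] at hex
          exact Nat.pow_le_pow_right (by norm_num) (by omega)
        · exact Nat.zero_le _
      -- triple term vanishes when #A ≤ 2
      have htrip0 : ∀ u v s : V, u ∈ Aᶜ → v ∈ Aᶜ → s ∈ Aᶜ → u ≠ v → u ≠ s → v ≠ s →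
          A.card ≤ 2 →
          (if (∀ a ∈ ({u, v, s} : Finset V), ∀ b ∈ ({u, v, s} : Finset V), ¬ G.Adj a b) then
            2 ^ #(A.filter fun a => ∀ y' ∈ ({u, v, s} : Finset V), ¬ G.Adj a y') else 0) = 0 := by
        intro u v s huB hvB hsB huv hus hvs hA2
        split_ifs with h
        · exfalso
          have hsub : ({u, v, s} : Finset V) ⊆ Aᶜ := by
            intro b hb
            simp only [Finset.mem_insert, Finset.mem_singleton] at hb
            rcases hb with rfl | rfl | rfl
            · exact huB
            · exact hvB
            · exact hsB
          have hex := exchange_le hA hmax hsub h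
          rw [Finset.card_insert_of_notMem (by simp [huv, hus]),
            Finset.card_insert_of_notMem (by simp [hvs]), Finset.card_singleton] at hex
          omega
        · rfl
      rw [hBeq, sum_powerset_quad hxyne hxz hxw hyz hyw hzw]
      rw [if_pos hemptyind, if_pos (hsingleind x), if_pos (hsingleind y), if_pos (hsingleind z),
        if_pos (hsingleind w),
        if_neg (hnind ({x, y} : Finset V) (by simp) (by simp)),
        if_neg (hnind ({x, y, w} : Finset V) (by simp) (by simp)),
        if_neg (hnind ({x, y, z} : Finset V) (by simp) (by simp)),
        if_neg (hnind ({x, y, z, w} : Finset V) (by simp) (by simp)), ht0]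
      have hαc : #A = 1 ∨ #A = 2 ∨ 3 ≤ #A := by omega
      rcases hαc with hα | hα | hα
      · exact absurd (by omega : n = 5) hn5
      · -- n = 6
        have hp1 := hpairb z w hzB hwB hzw 0 (by omega)
        have hp2 := hpairb y w hyB hwB hyw 0 (by omega)
        have hp3 := hpairb y z hyB hzB hyz 0 (by omega)
        have hp4 := hpairb x w hxB hwB hxw 0 (by omega)
        have hp5 := hpairb x z hxB hzB hxz 0 (by omega)
        have ht1 := htrip0 y z w hyB hzB hwB hyz hyw hzw (by omega)
        have ht2 := htrip0 x z w hxB hzB hwB hxz hxw hzw (by omega)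
        rw [ht1, ht2]
        have e1 : (2:ℕ) ^ #A = 4 := by rw [hα]; norm_num
        have e2 : n - 2 = 4 := by omega
        have b1 : (2:ℕ) ^ #(A.filter fun a => ∀ y' ∈ ({x} : Finset V), ¬ G.Adj a y') ≤ 2 := by
          have h01 : #(A.filter fun a => ∀ y' ∈ ({x} : Finset V), ¬ G.Adj a y') ≤ 1 := by omega
          calc (2:ℕ) ^ _ ≤ 2 ^ 1 := Nat.pow_le_pow_right (by norm_num) h01
            _ = 2 := by norm_num
        have b2 : (2:ℕ) ^ #(A.filter fun a => ∀ y' ∈ ({y} : Finset V), ¬ G.Adj a y') ≤ 2 := by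
          have h01 : #(A.filter fun a => ∀ y' ∈ ({y} : Finset V), ¬ G.Adj a y') ≤ 1 := by omega
          calc (2:ℕ) ^ _ ≤ 2 ^ 1 := Nat.pow_le_pow_right (by norm_num) h01
            _ = 2 := by norm_num
        have b3 : (2:ℕ) ^ #(A.filter fun a => ∀ y' ∈ ({z} : Finset V), ¬ G.Adj a y') ≤ 2 := by
          have h01 : #(A.filter fun a => ∀ y' ∈ ({z} : Finset V), ¬ G.Adj a y') ≤ 1 := by omega
          calc (2:ℕ) ^ _ ≤ 2 ^ 1 := Nat.pow_le_pow_right (by norm_num) h01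
            _ = 2 := by norm_num
        have b4 : (2:ℕ) ^ #(A.filter fun a => ∀ y' ∈ ({w} : Finset V), ¬ G.Adj a y') ≤ 2 := by
          have h01 : #(A.filter fun a => ∀ y' ∈ ({w} : Finset V), ¬ G.Adj a y') ≤ 1 := by omega
          calc (2:ℕ) ^ _ ≤ 2 ^ 1 := Nat.pow_le_pow_right (by norm_num) h01
            _ = 2 := by norm_num
        rw [e2]
        have e3 : (2:ℕ) ^ 4 = 16 := by norm_num
        have e4 : (2:ℕ) ^ 0 = 1 := by norm_num
        omega
      · -- main subcase: #A = m + 3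
        obtain ⟨m, hm⟩ := Nat.exists_eq_add_of_le hα
        have hsing := four_singles (m := m)
          (t1 := #(A.filter fun a => ∀ y' ∈ ({x} : Finset V), ¬ G.Adj a y'))
          (t2 := #(A.filter fun a => ∀ y' ∈ ({y} : Finset V), ¬ G.Adj a y'))
          (t3 := #(A.filter fun a => ∀ y' ∈ ({z} : Finset V), ¬ G.Adj a y'))
          (t4 := #(A.filter fun a => ∀ y' ∈ ({w} : Finset V), ¬ G.Adj a y'))
          (by omega) (by omega) (by omega) (by omega) (by omega)
        have hp1 := hpairb z w hzB hwB hzw (m+1) (by omega)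
        have hp2 := hpairb y w hyB hwB hyw (m+1) (by omega)
        have hp3 := hpairb y z hyB hzB hyz (m+1) (by omega)
        have hp4 := hpairb x w hxB hwB hxw (m+1) (by omega)
        have hp5 := hpairb x z hxB hzB hxz (m+1) (by omega)
        have ht1 := htripb y z w hyB hzB hwB hyz hyw hzw m (by omega)
        have ht2 := htripb x z w hxB hzB hwB hxz hxw hzw m (by omega)
        have hA3 : (2:ℕ) ^ #A = 2 ^ (m + 3) := by rw [show #A = m + 3 by omega]
        have hn2 : n - 2 = m + 5 := by omega
        rw [hn2, hA3]
        have e5 : (2:ℕ) ^ (m + 5) = 32 * 2 ^ m := by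
          rw [show m + 5 = m + 5 from rfl, pow_add]; ring
        have e3 : (2:ℕ) ^ (m + 3) = 8 * 2 ^ m := by rw [pow_add]; ring
        have e2 : (2:ℕ) ^ (m + 2) = 4 * 2 ^ m := by rw [pow_add]; ring
        have e1 : (2:ℕ) ^ (m + 1) = 2 * 2 ^ m := by rw [pow_add]; ring
        omega

end MainBound

section K2Count

lemma numIndep_eq' {V : Type*} [Fintype V] (G : SimpleGraph V)
    [DecidablePred (fun s : Finset V => ∀ a ∈ s, ∀ b ∈ s, ¬ G.Adj a b)] :
    numIndep G = #(univ.filter (fun s : Finset V => ∀ a ∈ s, ∀ b ∈ s, ¬ G.Adj a b)) := by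
  rw [numIndep, Nat.card_eq_fintype_card]
  convert Fintype.card_subtype _

open Classical in
lemma K2JoinE_count (n : ℕ) (hn : 4 ≤ n) : numIndep (K2JoinE n) = 2 ^ (n - 2) + 2 := by
  have h0n : 0 < n := by omega
  have h1n : 1 < n := by omega
  set v0 : Fin n := ⟨0, h0n⟩ with hv0
  set v1 : Fin n := ⟨1, h1n⟩ with hv1
  have hv01 : v0 ≠ v1 := by
    simp [hv0, hv1, Fin.ext_iff]
  rw [numIndep_eq']
  set H : Finset (Fin n) := univ.filter (fun i : Fin n => 2 ≤ (i : ℕ)) with hH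
  have hfilter : (univ.filter (fun s : Finset (Fin n) => ∀ a ∈ s, ∀ b ∈ s, ¬ (K2JoinE n).Adj a b))
      = H.powerset ∪ {{v0}, {v1}} := by
    ext s
    simp only [Finset.mem_filter, Finset.mem_univ, true_and, Finset.mem_union,
      Finset.mem_powerset, Finset.mem_insert, Finset.mem_singleton]
    constructor
    · intro hs
      by_cases hlow : ∃ i ∈ s, (i : ℕ) < 2
      · obtain ⟨i, his, hi⟩ := hlow
        right
        have hsi : s = {i} := by
          apply (Finset.eq_singleton_iff_unique_mem).2
          refine ⟨his, fun j hjs => ?_⟩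
          by_contra hji
          exact hs j hjs i his ⟨hji, Or.inr hi⟩
        have : i = v0 ∨ i = v1 := by
          have h01 : (i : ℕ) = 0 ∨ (i : ℕ) = 1 := by omega
          rcases h01 with h | h
          · left; exact Fin.ext h
          · right; exact Fin.ext h
        rcases this with rfl | rfl
        · left; exact hsi
        · right; exact hsi
      · left
        push_neg at hlow
        intro i his
        rw [hH, Finset.mem_filter]
        exact ⟨Finset.mem_univ _, hlow i his⟩
    · rintro (hsub | rfl | rfl)
      · intro a ha b hb hadj
        have ha2 : 2 ≤ (a : ℕ) := (Finset.mem_filter.1 (hsub ha)).2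
        have hb2 : 2 ≤ (b : ℕ) := (Finset.mem_filter.1 (hsub hb)).2
        rcases hadj.2 with h | h <;> omega
      · intro a ha b hb hadj
        rw [Finset.mem_singleton] at ha hb
        subst ha; subst hb
        exact hadj.1 rfl
      · intro a ha b hb hadj
        rw [Finset.mem_singleton] at ha hb
        subst ha; subst hb
        exact hadj.1 rfl
  rw [hfilter]
  have hdisj : Disjoint (H.powerset) ({{v0}, {v1}} : Finset (Finset (Fin n))) := by
    rw [Finset.disjoint_right]
    intro s hs hmem
    rw [Finset.mem_insert, Finset.mem_singleton] at hs
    have : ∀ w : Fin n, (w : ℕ) < 2 → {w} ∉ H.powerset := by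
      intro w hw hmem'
      have := Finset.mem_powerset.1 hmem' (Finset.mem_singleton_self w)
      rw [hH, Finset.mem_filter] at this
      omega
    rcases hs with rfl | rfl
    · exact this v0 (by simp [hv0]) hmem
    · exact this v1 (by simp [hv1]) hmem
  rw [Finset.card_union_of_disjoint hdisj, Finset.card_powerset]
  have hc2 : #({{v0}, {v1}} : Finset (Finset (Fin n))) = 2 := by
    rw [Finset.card_insert_of_notMem (by simp [hv01]), Finset.card_singleton]
  have hHcard : #H = n - 2 := by
    have hsplit := Finset.card_filter_add_card_filter_not
      (s := (univ : Finset (Fin n))) (p := fun i : Fin n => 2 ≤ (i : ℕ))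
    have hlowset : (univ.filter (fun i : Fin n => ¬ 2 ≤ (i : ℕ))) = {v0, v1} := by
      ext i
      simp only [Finset.mem_filter, Finset.mem_univ, true_and, Finset.mem_insert,
        Finset.mem_singleton, not_le, Fin.ext_iff, hv0, hv1, Fin.val_mk]
      omega
    rw [hlowset] at hsplit
    have : #({v0, v1} : Finset (Fin n)) = 2 := by
      rw [Finset.card_insert_of_notMem (by simp [hv01]), Finset.card_singleton]
    rw [this] at hsplit
    simp only [Finset.card_univ, Fintype.card_fin] at hsplit
    rw [← hH] at hsplit
    omega
  rw [hc2, hHcard]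

end K2Count

theorem max_indep_sets_2conn_3chrom {V : Type*} [Fintype V] (n : ℕ) (hn : 4 ≤ n) (hn5 : n ≠ 5)
    (G : SimpleGraph V) (hcard : Fintype.card V = n)
    (hchrom : G.chromaticNumber = 3) (hconn : LConnected G 2) :
    numIndep (K2JoinE n) = 2 ^ (n - 2) + 2 ∧
    numIndep G ≤ 2 ^ (n - 2) + 2 := by
  constructor
  · exact K2JoinE_count n hn
  · have hdeg := min_degree_two (by omega : 4 ≤ Fintype.card V) hconn
    have hnonbip : ¬ G.Colorable 2 := by
      intro h
      have := h.chromaticNumber_le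
      rw [hchrom] at this
      norm_num at this
    exact main_bound G n hn hn5 hcard hdeg hnonbip
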